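/- Let η : Ω → ℝ be measurable and suppose P(|η| > x) ≥ exp(−W(log x)) for all x ≥ e². Then there exist p₀ ≥ 2 and a constant C₀ ∈ (0,∞) such that |η|_p ≥ C₀·ψ(p) for all p ≥ p₀. -/

import Mathlib

open MeasureTheory Filter Set
open scoped ENNReal Topology

/-- The restricted Young–Fenchel transform `W*(p) = sup_{z ≥ 2} (p·z − W(z))`. -/
noncomputable def Wstar (W : ℝ → ℝ) (p : ℝ) : ℝ :=
  sSup {y | ∃ z, 2 ≤ z ∧ y = p * z - W z}

/-- `ψ(p) = exp(W*(p)/p)`. -/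
noncomputable def psiW (W : ℝ → ℝ) (p : ℝ) : ℝ :=
  Real.exp (Wstar W p / p)

/-- `W` is continuous, convex, strictly increasing on `[2,∞)` and its
left derivative tends to `+∞`. -/
structure WClass (W : ℝ → ℝ) : Prop where
  cont : ContinuousOn W (Set.Ici 2)
  convex : ConvexOn ℝ (Set.Ici 2) W
  strictMono : StrictMonoOn W (Set.Ici 2)
  leftDeriv_tendsto :
    Filter.Tendsto (fun p => derivWithin W (Set.Iio p) p) Filter.atTop Filter.atTop

theorem stmt2 {Ω : Type*} [MeasurableSpace Ω] (μ : Measure Ω) [IsProbabilityMeasure μ]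
    (W : ℝ → ℝ) (hW : WClass W)
    (η : Ω → ℝ) (hη : Measurable η)
    (htail : ∀ x : ℝ, Real.exp 2 ≤ x →
      ENNReal.ofReal (Real.exp (-(W (Real.log x)))) ≤ μ {ω | x < |η ω|}) :
    ∃ p₀ : ℝ, 2 ≤ p₀ ∧ ∃ C₀ : ℝ, 0 < C₀ ∧ ∀ p : ℝ, p₀ ≤ p →
      ENNReal.ofReal (C₀ * psiW W p) ≤ eLpNorm η (ENNReal.ofReal p) μ := by
  refine ⟨2, le_refl 2, 1, one_pos, fun p hp => ?_⟩
  have hp0 : (0:ℝ) < p := by linarith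
  set I := ∫⁻ ω, (‖η ω‖₊ : ℝ≥0∞) ^ p ∂μ with hI
  have key : ∀ z : ℝ, 2 ≤ z → ENNReal.ofReal (Real.exp (p * z - W z)) ≤ I := by
    intro z hz
    set x := Real.exp z with hxdef
    have hx : Real.exp 2 ≤ x := Real.exp_le_exp.mpr hz
    have hxpos : 0 < x := Real.exp_pos z
    have hA : MeasurableSet {ω | x < |η ω|} :=
      measurableSet_lt measurable_const hη.abs
    have h1 : ENNReal.ofReal (Real.exp (p * z - W z))
        = ENNReal.ofReal (x ^ p) * ENNReal.ofReal (Real.exp (-(W z))) := by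
      rw [← ENNReal.ofReal_mul (by positivity)]
      congr 1
      rw [hxdef, ← Real.exp_mul, ← Real.exp_add]
      ring_nf
    have h2 : ENNReal.ofReal (Real.exp (-(W z))) ≤ μ {ω | x < |η ω|} := by
      have := htail x hx
      rwa [hxdef, Real.log_exp] at this
    calc ENNReal.ofReal (Real.exp (p * z - W z))
        ≤ ENNReal.ofReal (x ^ p) * μ {ω | x < |η ω|} := by
          rw [h1]; gcongr
      _ = ∫⁻ _ω in {ω | x < |η ω|}, ENNReal.ofReal (x ^ p) ∂μ := by
          rw [setLIntegral_const, mul_comm]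
      _ ≤ ∫⁻ ω in {ω | x < |η ω|}, (‖η ω‖₊ : ℝ≥0∞) ^ p ∂μ := by
          refine setLIntegral_mono' hA fun ω hω => ?_
          have hω' : x < |η ω| := hω
          rw [← ENNReal.ofReal_rpow_of_pos hxpos]
          refine ENNReal.rpow_le_rpow ?_ hp0.le
          rw [← enorm_eq_nnnorm, ← ofReal_norm, Real.norm_eq_abs]
          exact ENNReal.ofReal_le_ofReal hω'.le
      _ ≤ I := setLIntegral_le_lintegral _ _
  have hne : (ENNReal.ofReal p) ≠ 0 := (ENNReal.ofReal_pos.mpr hp0).ne'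
  have hnt : (ENNReal.ofReal p) ≠ ⊤ := ENNReal.ofReal_ne_top
  rw [eLpNorm_eq_lintegral_rpow_enorm_toReal hne hnt, ENNReal.toReal_ofReal hp0.le, one_mul]
  simp only [enorm_eq_nnnorm]
  rw [one_div, ENNReal.le_rpow_inv_iff hp0]
  have hpow : ENNReal.ofReal (psiW W p) ^ p = ENNReal.ofReal (Real.exp (Wstar W p)) := by
    unfold psiW
    rw [ENNReal.ofReal_rpow_of_pos (Real.exp_pos _)]
    congr 1
    rw [← Real.exp_mul, div_mul_cancel₀ _ hp0.ne']
  rw [hpow]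
  rcases eq_or_ne I ⊤ with hItop | hItop
  · rw [← hI, hItop]; exact le_top
  · rw [← hI]
    have hub : ∀ y ∈ {y | ∃ z, 2 ≤ z ∧ y = p * z - W z}, y ≤ Real.log I.toReal := by
      rintro y ⟨z, hz, rfl⟩
      have h := key z hz
      have h' : Real.exp (p * z - W z) ≤ I.toReal :=
        (ENNReal.ofReal_le_iff_le_toReal hItop).mp h
      calc p * z - W z = Real.log (Real.exp (p * z - W z)) := (Real.log_exp _).symm
        _ ≤ Real.log I.toReal := Real.log_le_log (Real.exp_pos _) h'
    have hItpos : 0 < I.toReal := by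
      have h2 : Real.exp (p * 2 - W 2) ≤ I.toReal :=
        (ENNReal.ofReal_le_iff_le_toReal hItop).mp (key 2 (le_refl 2))
      exact lt_of_lt_of_le (Real.exp_pos _) h2
    have hWstar : Wstar W p ≤ Real.log I.toReal :=
      csSup_le ⟨p * 2 - W 2, 2, le_refl 2, rfl⟩ hub
    have : Real.exp (Wstar W p) ≤ I.toReal := by
      calc Real.exp (Wstar W p) ≤ Real.exp (Real.log I.toReal) := Real.exp_le_exp.mpr hWstar
        _ = I.toReal := Real.exp_log hItpos
    calc ENNReal.ofReal (Real.exp (Wstar W p)) ≤ ENNReal.ofReal I.toReal :=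
          ENNReal.ofReal_le_ofReal this
      _ = I := ENNReal.ofReal_toReal hItop
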